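/- Let 0 < T < S ≤ ∞. Let μ : [T, S) → (0, ∞) be continuously differentiable and nonincreasing with T² μ(T) ≥ 1. Let H be twice continuously differentiable on [0, S) with H(0) = H'(0) = 0, H''(t) ≥ 0 on [0, S), H(t) > 0 and H'(t) > 0 for all t ∈ (0, S), and H''(t) ≥ μ(t) H(t) for all t ∈ [T, S). Then for all t ∈ [T, S): H'(t)² ≥ μ(t) H(t)² / (T² μ(T)); in particular H'(t) ≥ √(μ(t)/(T²μ(T))) · H(t). -/

import Mathlib

open Set

/-- One-sided first derivative on `[0, ∞)`. -/
noncomputable def Hd (H : ℝ → ℝ) : ℝ → ℝ := derivWithin H (Set.Ici 0)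

/-- One-sided second derivative on `[0, ∞)`. -/
noncomputable def Hdd (H : ℝ → ℝ) : ℝ → ℝ := derivWithin (Hd H) (Set.Ici 0)

/-- Let `0 < T < S ≤ ∞`, let `μ` be `C¹`, positive and nonincreasing on `[T, S)` with
`T² μ(T) ≥ 1`, and let `H` be `C²` on `[0, S)` with `H(0) = H'(0) = 0`, `H'' ≥ 0` on `[0, S)`,
`H > 0`, `H' > 0` on `(0, S)`, and `H''(t) ≥ μ(t) H(t)` on `[T, S)`. Then for all
`t ∈ [T, S)`: `H'(t)² ≥ μ(t) H(t)² / (T² μ(T))` and `H'(t) ≥ √(μ(t)/(T² μ(T))) H(t)`. -/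
theorem mu_comparison_lemma (T : ℝ) (S : EReal) (hT : 0 < T) (hTS : (T : EReal) < S)
    (μ H : ℝ → ℝ)
    (hμsm : ContDiffOn ℝ 1 μ {t : ℝ | T ≤ t ∧ (t : EReal) < S})
    (hμpos : ∀ t : ℝ, T ≤ t → (t : EReal) < S → 0 < μ t)
    (hμmono : AntitoneOn μ {t : ℝ | T ≤ t ∧ (t : EReal) < S})
    (hμT : 1 ≤ T ^ 2 * μ T)
    (hsm : ContDiffOn ℝ 2 H {t : ℝ | 0 ≤ t ∧ (t : EReal) < S})
    (h0 : H 0 = 0) (h0' : Hd H 0 = 0)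
    (hconv : ∀ t : ℝ, 0 ≤ t → (t : EReal) < S → 0 ≤ Hdd H t)
    (hHpos : ∀ t : ℝ, 0 < t → (t : EReal) < S → 0 < H t ∧ 0 < Hd H t)
    (hineq : ∀ t : ℝ, T ≤ t → (t : EReal) < S → μ t * H t ≤ Hdd H t) :
    ∀ t : ℝ, T ≤ t → (t : EReal) < S →
      μ t * H t ^ 2 / (T ^ 2 * μ T) ≤ (Hd H t) ^ 2 ∧
      Real.sqrt (μ t / (T ^ 2 * μ T)) * H t ≤ Hd H t := by
  set U : Set ℝ := {x : ℝ | (x : EReal) < S} with hUdef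
  have hUopen : IsOpen U := by
    have : U = (fun x : ℝ => (x : EReal)) ⁻¹' (Iio S) := rfl
    rw [this]; exact isOpen_Iio.preimage continuous_coe_real_ereal
  have hUlow : ∀ {x y : ℝ}, x ≤ y → y ∈ U → x ∈ U := by
    intro x y hxy hy
    exact lt_of_le_of_lt (EReal.coe_le_coe_iff.2 hxy) hy
  set D0 : Set ℝ := Ici 0 ∩ U with hD0def
  set Dμ : Set ℝ := Ici T ∩ U with hDμdef
  have hset0 : {t : ℝ | 0 ≤ t ∧ (t : EReal) < S} = D0 := by
    ext x; simp [hD0def, hUdef, Set.mem_inter_iff, mem_Ici, mem_setOf_eq]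
  have hsetμ : {t : ℝ | T ≤ t ∧ (t : EReal) < S} = Dμ := by
    ext x; simp [hDμdef, hUdef, Set.mem_inter_iff, mem_Ici, mem_setOf_eq]
  rw [hset0] at hsm
  rw [hsetμ] at hμsm hμmono
  -- basic structure of D0
  have hD0conv : Convex ℝ D0 := by
    rw [convex_iff_ordConnected]
    constructor
    intro x hx y hy z hz
    exact ⟨le_trans hx.1 hz.1, hUlow hz.2 hy.2⟩
  have hTU : T ∈ U := hTS
  have hD0u : UniqueDiffOn ℝ D0 := by
    apply uniqueDiffOn_convex hD0conv
    refine ⟨T, ?_⟩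
    have hsub : Ioi 0 ∩ U ⊆ D0 := inter_subset_inter Ioi_subset_Ici_self subset_rfl
    exact interior_maximal hsub (isOpen_Ioi.inter hUopen) ⟨hT, hTU⟩
  -- the first derivative within D0
  set f' : ℝ → ℝ := derivWithin H D0 with hf'def
  have hd_eq : ∀ x ∈ U, Hd H x = f' x := by
    intro x hx
    rw [hf'def, hD0def, derivWithin_inter (hUopen.mem_nhds hx)]
    rfl
  have hf'c1 : ContDiffOn ℝ 1 f' D0 := hsm.derivWithin hD0u (by norm_num)
  have hHdCont : ContinuousOn (Hd H) D0 :=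
    hf'c1.continuousOn.congr (fun x hx => hd_eq x hx.2)
  have hHCont : ContinuousOn H D0 := hsm.continuousOn
  -- key pointwise facts at interior points
  have key : ∀ x : ℝ, 0 < x → x ∈ U → DifferentiableAt ℝ H x ∧ deriv H x = Hd H x ∧
      DifferentiableAt ℝ (Hd H) x ∧ deriv (Hd H) x = Hdd H x := by
    intro x hx hxU
    have hxD0 : x ∈ D0 := ⟨le_of_lt hx, hxU⟩
    have hnhds : D0 ∈ nhds x := by
      have hsub : Ioi 0 ∩ U ⊆ D0 := inter_subset_inter Ioi_subset_Ici_self subset_rfl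
      exact Filter.mem_of_superset ((isOpen_Ioi.inter hUopen).mem_nhds ⟨hx, hxU⟩) hsub
    have hHdiff : DifferentiableAt ℝ H x :=
      ((hsm.differentiableOn (by norm_num)) x hxD0).differentiableAt hnhds
    have hf'diff : DifferentiableAt ℝ f' x :=
      ((hf'c1.differentiableOn one_ne_zero) x hxD0).differentiableAt hnhds
    have hev : Hd H =ᶠ[nhds x] f' :=
      Filter.eventuallyEq_of_mem hnhds (fun y hy => hd_eq y hy.2)
    have hHddiff : DifferentiableAt ℝ (Hd H) x := hf'diff.congr_of_eventuallyEq hev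
    refine ⟨hHdiff, ?_, hHddiff, ?_⟩
    · rw [hd_eq x hxU, hf'def, derivWithin_of_mem_nhds hnhds]
    · have e1 : Hdd H x = derivWithin (Hd H) D0 x := by
        rw [Hdd, hD0def, derivWithin_inter (hUopen.mem_nhds hxU)]
      have e2 : derivWithin (Hd H) D0 x = derivWithin f' D0 x :=
        derivWithin_congr (fun y hy => hd_eq y hy.2) (hd_eq x hxU)
      rw [e1, e2, derivWithin_of_mem_nhds hnhds, hev.deriv_eq]
  -- Claim 1 : H x ≤ x * Hd H x for x ≥ 0 in U
  have claim1 : ∀ x : ℝ, 0 ≤ x → x ∈ U → H x ≤ x * Hd H x := by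
    intro x hx hxU
    have hsub : Icc 0 x ⊆ D0 := fun y hy => ⟨hy.1, hUlow hy.2 hxU⟩
    set ψ : ℝ → ℝ := fun y => y * Hd H y - H y with hψdef
    have hmono : MonotoneOn ψ (Icc 0 x) := by
      apply monotoneOn_of_deriv_nonneg (convex_Icc 0 x)
      · exact ((continuousOn_id.mul (hHdCont.mono hsub)).sub (hHCont.mono hsub))
      · rw [interior_Icc]
        intro y hy
        obtain ⟨hH1, _, hH3, _⟩ := key y hy.1 (hUlow (le_of_lt hy.2) hxU)
        exact ((differentiableAt_id.mul hH3).sub hH1).differentiableWithinAt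
      · rw [interior_Icc]
        intro y hy
        have hyU : y ∈ U := hUlow (le_of_lt hy.2) hxU
        obtain ⟨hH1, hH2, hH3, hH4⟩ := key y hy.1 hyU
        have hder : HasDerivAt ψ (y * Hdd H y) y := by
          have := ((hasDerivAt_id y).fun_mul hH3.hasDerivAt).fun_sub hH1.hasDerivAt
          rw [hH4, hH2] at this
          exact this.congr_deriv (by norm_num)
        rw [hder.deriv]
        exact mul_nonneg (le_of_lt hy.1) (hconv y (le_of_lt hy.1) hyU)
    have h00 : ψ 0 = 0 := by simp [hψdef, h0]
    have := hmono (left_mem_Icc.2 hx) (right_mem_Icc.2 hx) hx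
    rw [h00] at this
    simp only [hψdef] at this
    linarith
  -- main argument
  intro t hTt htS
  have htU : t ∈ U := htS
  have ht0 : 0 < t := lt_of_lt_of_le hT hTt
  set C : ℝ := T ^ 2 * μ T with hCdef
  have hC0 : 0 < C := lt_of_lt_of_le one_pos hμT
  have hμT0 : 0 < μ T := hμpos T le_rfl hTS
  -- G is monotone on [T, t]
  set G : ℝ → ℝ := fun y => (Hd H y) ^ 2 - μ y * (H y) ^ 2 / C with hGdef
  have hsubμ : Icc T t ⊆ Dμ := fun y hy => ⟨hy.1, hUlow hy.2 htU⟩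
  have hsub0 : Icc T t ⊆ D0 := fun y hy => ⟨le_trans (le_of_lt hT) hy.1, hUlow hy.2 htU⟩
  have hGmono : MonotoneOn G (Icc T t) := by
    apply monotoneOn_of_deriv_nonneg (convex_Icc T t)
    · exact (((hHdCont.mono hsub0).pow 2).sub
        (((hμsm.continuousOn.mono hsubμ).mul ((hHCont.mono hsub0).pow 2)).div_const C))
    · rw [interior_Icc]
      intro y hy
      have hyU : y ∈ U := hUlow (le_of_lt hy.2) htU
      have hy0 : 0 < y := lt_trans hT hy.1
      obtain ⟨hH1, _, hH3, _⟩ := key y hy0 hyU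
      have hnhdsμ : Dμ ∈ nhds y := by
        have hsub : Ioi T ∩ U ⊆ Dμ := inter_subset_inter Ioi_subset_Ici_self subset_rfl
        exact Filter.mem_of_superset ((isOpen_Ioi.inter hUopen).mem_nhds ⟨hy.1, hyU⟩) hsub
      have hμdiff : DifferentiableAt ℝ μ y :=
        ((hμsm.differentiableOn one_ne_zero) y ⟨le_of_lt hy.1, hyU⟩).differentiableAt hnhdsμ
      exact ((hH3.pow 2).sub ((hμdiff.mul (hH1.pow 2)).div_const C)).differentiableWithinAt
    · rw [interior_Icc]
      intro y hy
      have hyU : y ∈ U := hUlow (le_of_lt hy.2) htU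
      have hy0 : 0 < y := lt_trans hT hy.1
      obtain ⟨hH1, hH2, hH3, hH4⟩ := key y hy0 hyU
      have hnhdsμ : Dμ ∈ nhds y := by
        have hsub : Ioi T ∩ U ⊆ Dμ := inter_subset_inter Ioi_subset_Ici_self subset_rfl
        exact Filter.mem_of_superset ((isOpen_Ioi.inter hUopen).mem_nhds ⟨hy.1, hyU⟩) hsub
      have hμdiff : DifferentiableAt ℝ μ y :=
        ((hμsm.differentiableOn one_ne_zero) y ⟨le_of_lt hy.1, hyU⟩).differentiableAt hnhdsμ
      -- deriv μ y ≤ 0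
      have hμ'le : deriv μ y ≤ 0 := by
        have hsl : Filter.Tendsto (slope μ y) (nhdsWithin y (Ioi y)) (nhds (deriv μ y)) := by
          refine (hasDerivAt_iff_tendsto_slope.1 hμdiff.hasDerivAt).mono_left
            (nhdsWithin_mono y ?_)
          intro z hz
          simp only [mem_compl_iff, mem_singleton_iff]
          exact ne_of_gt hz
        refine le_of_tendsto hsl ?_
        filter_upwards [Ioo_mem_nhdsGT_of_mem (⟨le_refl y, hy.2⟩ : y ∈ Ico y t)] with z hz
        rw [slope_def_field]
        apply div_nonpos_of_nonpos_of_nonneg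
        · rw [sub_nonpos]
          exact hμmono ⟨le_of_lt hy.1, hyU⟩ ⟨le_of_lt (lt_trans hy.1 hz.1), hUlow (le_of_lt hz.2) htU⟩
            (le_of_lt hz.1)
        · linarith [hz.1]
      -- compute deriv G
      have hder : HasDerivAt G
          (2 * Hd H y ^ 1 * Hdd H y -
            (deriv μ y * H y ^ 2 + μ y * (2 * H y ^ 1 * Hd H y)) / C) y := by
        have h1 : HasDerivAt (fun z => Hd H z ^ 2) (2 * Hd H y ^ 1 * Hdd H y) y := by
          have := hH3.hasDerivAt.fun_pow 2
          rw [hH4] at this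
          exact this.congr_deriv (by norm_num)
        have h2 : HasDerivAt (fun z => μ z * H z ^ 2 / C)
            ((deriv μ y * H y ^ 2 + μ y * (2 * H y ^ 1 * Hd H y)) / C) y := by
          have hp : HasDerivAt (fun z => H z ^ 2) (2 * H y ^ 1 * Hd H y) y := by
            have := hH1.hasDerivAt.fun_pow 2
            rw [hH2] at this
            exact this.congr_deriv (by norm_num)
          exact (hμdiff.hasDerivAt.mul hp).div_const C
        exact h1.sub h2
      rw [hder.deriv]
      have hHy := hHpos y hy0 hyU
      have hμy := hμpos y (le_of_lt hy.1) hyU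
      have hiy := hineq y (le_of_lt hy.1) hyU
      rw [sub_nonneg, div_le_iff₀ hC0]
      nlinarith [mul_nonneg (le_of_lt hHy.2) (sub_nonneg.2 hiy),
        mul_nonneg (mul_nonneg (le_of_lt hHy.1) (le_of_lt hHy.2)) (le_of_lt hμy),
        mul_nonneg (le_of_lt hHy.2) (hconv y (le_of_lt hy0) hyU),
        sq_nonneg (H y), mul_nonneg (mul_nonneg (le_of_lt hHy.2)
          (sub_nonneg.2 hiy)) (sub_nonneg.2 hμT)]
  -- G T ≥ 0
  have hGT : 0 ≤ G T := by
    have hc1 := claim1 T (le_of_lt hT) hTU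
    have hHT := hHpos T hT hTS
    rw [hGdef]
    simp only [sub_nonneg]
    rw [div_le_iff₀ hC0, hCdef]
    have h2 : H T ^ 2 ≤ (T * Hd H T) ^ 2 := pow_le_pow_left₀ hHT.1.le hc1 2
    nlinarith [mul_le_mul_of_nonneg_left h2 hμT0.le]
  have hGt : 0 ≤ G t := le_trans hGT (hGmono (left_mem_Icc.2 hTt) (right_mem_Icc.2 hTt) hTt)
  have hfirst : μ t * H t ^ 2 / (T ^ 2 * μ T) ≤ (Hd H t) ^ 2 := by
    rw [hGdef] at hGt
    simp only [sub_nonneg] at hGt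
    exact hGt
  refine ⟨hfirst, ?_⟩
  have hHt := hHpos t ht0 htU
  have hμt := hμpos t hTt htS
  have hsq : Real.sqrt (μ t / (T ^ 2 * μ T)) * H t
      = Real.sqrt (μ t * H t ^ 2 / (T ^ 2 * μ T)) := by
    rw [show μ t * H t ^ 2 / (T ^ 2 * μ T) = (μ t / (T ^ 2 * μ T)) * H t ^ 2 by ring,
      Real.sqrt_mul (by positivity), Real.sqrt_sq hHt.1.le]
  rw [hsq]
  calc Real.sqrt (μ t * H t ^ 2 / (T ^ 2 * μ T)) ≤ Real.sqrt ((Hd H t) ^ 2) :=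
        Real.sqrt_le_sqrt hfirst
    _ = Hd H t := Real.sqrt_sq (le_of_lt hHt.2)
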